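/- arXiv:1405.5371 — 8 statements merged into one kernel-verified Lean document; each statement's English description precedes it below -/
import Mathlib

section
/- (Key exchange lemma behind Theorem 3) Let J = {1,…,n} be a finite set of jobs partially ordered by a strict partial order ≺ (precedence constraints), let K ≥ 1, and for each j ∈ J and i ∈ {1,…,K} let p_j(S_i) ≥ 0, w_j(S_i) ≥ 0, d_j(S_i) ≥ 0 be given. A feasible schedule is a bijection π : {1,…,n} → J such that i ≺ j implies that i occupies an earlier position than j in π. For a feasible schedule π and a job j, let pred(π,j) be the set consisting of j and all jobs preceding j in π, and define the maximum-cost objective cost(π) = max_{j∈J} F_j(pred(π,j)), where F_j(D) = max_{i∈{1,…,K}} [ w_j(S_i)( Σ_{k∈D} p_k(S_i) − d_j(S_i) ) ]^+. Suppose j* ∈ J has no successor (there is no l ∈ J with j* ≺ l) and satisfies F_{j*}(J) ≤ F_i(J) for every job i ∈ J that has no successor. Then there exists a feasible schedule π with j* scheduled in the last position such that cost(π) ≤ cost(σ) for every feasible schedule σ. -/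
/-- `Fj hK p w d D j = max_{i∈[K]} [ w_j(S_i) ( Σ_{k∈D} p_k(S_i) − d_j(S_i) ) ]^+`. -/
noncomputable def Fj {n K : ℕ} (hK : 0 < K)
    (p w d : Fin n → Fin K → ℝ) (D : Finset (Fin n)) (j : Fin n) : ℝ :=
  Finset.univ.sup' ⟨⟨0, hK⟩, Finset.mem_univ _⟩
    (fun i : Fin K => max 0 (w j i * ((∑ k ∈ D, p k i) - d j i)))

/-- The min-max cost of a schedule `π` (where `π r` is the job at position `r`):
`cost(π) = max_{j} F_j(pred(π,j))` with `pred(π,j) = {k : pos(k) ≤ pos(j)}`. -/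
noncomputable def schedCost {n K : ℕ} (hn : 0 < n) (hK : 0 < K)
    (p w d : Fin n → Fin K → ℝ) (π : Equiv.Perm (Fin n)) : ℝ :=
  Finset.univ.sup' ⟨⟨0, hn⟩, Finset.mem_univ _⟩
    (fun j : Fin n =>
      Fj hK p w d (Finset.univ.filter (fun k => π.symm k ≤ π.symm j)) j)

lemma Fj_mono {n K : ℕ} (hK : 0 < K) (p w d : Fin n → Fin K → ℝ)
    (hp : ∀ j i, 0 ≤ p j i) (hw : ∀ j i, 0 ≤ w j i)
    {D D' : Finset (Fin n)} (h : D ⊆ D') (j : Fin n) :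
    Fj hK p w d D j ≤ Fj hK p w d D' j := by
  apply Finset.sup'_le
  intro i _
  refine le_trans ?_ (Finset.le_sup' _ (Finset.mem_univ i))
  apply max_le_max le_rfl
  apply mul_le_mul_of_nonneg_left ?_ (hw j i)
  apply sub_le_sub_right
  exact Finset.sum_le_sum_of_subset_of_nonneg h (fun k _ _ => hp k i)

lemma exists_feasible {n : ℕ} (prec : Fin n → Fin n → Prop)
    (hirr : ∀ j, ¬ prec j j) (htrans : ∀ i j k, prec i j → prec j k → prec i k) :
    ∃ σ : Equiv.Perm (Fin n), ∀ i j, prec i j → σ.symm i < σ.symm j := by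
  classical
  let r : Fin n → Fin n → Prop := fun a b => a = b ∨ prec a b
  haveI : IsPartialOrder (Fin n) r :=
    { refl := fun a => Or.inl rfl
      trans := by
        rintro a b c (rfl | hab) (rfl | hbc)
        · exact Or.inl rfl
        · exact Or.inr hbc
        · exact Or.inr hab
        · exact Or.inr (htrans _ _ _ hab hbc)
      antisymm := by
        intro a b h1 h2
        rcases h1 with h1 | h1
        · exact h1
        · rcases h2 with h2 | h2
          · exact h2.symm
          · exact absurd (htrans _ _ _ h1 h2) (hirr a) }
  obtain ⟨s, hlin, hrs⟩ := extend_partialOrder r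
  haveI := hlin
  letI : DecidableRel s := Classical.decRel s
  let l := Finset.univ.sort s
  have hlen : l.length = n := by simp [l, Finset.length_sort]
  let f : Fin n → Fin n := fun t => l.get (Fin.cast hlen.symm t)
  have hfinj : Function.Injective f := by
    intro a b hab
    have h2 := (List.Nodup.get_inj_iff (Finset.sort_nodup (s := Finset.univ) (r := s))).mp hab
    simpa [Fin.ext_iff] using h2
  obtain ⟨π, hπ⟩ : ∃ π : Equiv.Perm (Fin n), ∀ t, π t = f t :=
    ⟨Equiv.ofBijective f (Finite.injective_iff_bijective.mp hfinj), fun t => rfl⟩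
  refine ⟨π, fun i j hij => ?_⟩
  by_contra hcon
  have hle : π.symm j ≤ π.symm i := not_lt.mp hcon
  have hij' : i ≠ j := fun h => hirr j (h ▸ hij)
  rcases eq_or_lt_of_le hle with heq | hlt
  · exact hij' (π.symm.injective heq).symm
  · have hs : s j i := by
      have h3 := (Finset.pairwise_sort (s := Finset.univ) (r := s)).rel_get_of_lt
        (a := Fin.cast hlen.symm (π.symm j)) (b := Fin.cast hlen.symm (π.symm i)) (by simpa using hlt)
      have e1 : f (π.symm j) = j := by rw [← hπ]; exact π.apply_symm_apply j
      have e2 : f (π.symm i) = i := by rw [← hπ]; exact π.apply_symm_apply i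
      have h4 : s (f (π.symm j)) (f (π.symm i)) := h3
      rw [e1, e2] at h4
      exact h4
    have hs' : s i j := hrs _ _ (Or.inr hij)
    exact hij' (hlin.toIsPartialOrder.toAntisymm.antisymm _ _ hs' hs)

lemma exchange_step {n K : ℕ} (hn : 0 < n) (hK : 0 < K)
    (prec : Fin n → Fin n → Prop)
    (p w d : Fin n → Fin K → ℝ)
    (hp : ∀ j i, 0 ≤ p j i) (hw : ∀ j i, 0 ≤ w j i)
    (jstar : Fin n) (hns : ∀ l, ¬ prec jstar l)
    (hmin : ∀ i : Fin n, (∀ l, ¬ prec i l) →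
      Fj hK p w d Finset.univ jstar ≤ Fj hK p w d Finset.univ i)
    (σ : Equiv.Perm (Fin n)) (hσ : ∀ i j, prec i j → σ.symm i < σ.symm j) :
    ∃ π : Equiv.Perm (Fin n),
      (∀ i j, prec i j → π.symm i < π.symm j) ∧
      π ⟨n - 1, Nat.sub_lt hn Nat.one_pos⟩ = jstar ∧
      schedCost hn hK p w d π ≤ schedCost hn hK p w d σ := by
  classical
  set pos := σ.symm with hpos
  set r : ℕ := (pos jstar : ℕ) with hr
  have hrlt : r < n := (pos jstar).isLt
  set g : Fin n → ℕ := fun k => if k = jstar then n - 1 else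
    if (pos k : ℕ) < r then (pos k : ℕ) else (pos k : ℕ) - 1 with hg
  have hglt : ∀ k, g k < n := by
    intro k
    have h1 := (pos k).isLt
    simp only [hg]
    split_ifs <;> omega
  have hne : ∀ k, k ≠ jstar → (pos k : ℕ) ≠ r := by
    intro k hk h
    exact hk (σ.symm.injective (Fin.ext h))
  have hlt' : ∀ k, k ≠ jstar → g k < n - 1 := by
    intro k hk
    have h1 := (pos k).isLt
    have h2 := hne k hk
    simp only [hg, if_neg hk]
    split_ifs <;> omega
  have hgjs : g jstar = n - 1 := by simp [hg]
  have key : ∀ a b : Fin n, a ≠ jstar → b ≠ jstar → g a = g b →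
      (pos a : ℕ) = (pos b : ℕ) := by
    intro a b ha hb hab
    have h1 := (pos a).isLt
    have h2 := (pos b).isLt
    have h3 := hne a ha
    have h4 := hne b hb
    simp only [hg, if_neg ha, if_neg hb] at hab
    split_ifs at hab <;> omega
  have key2 : ∀ a b : Fin n, a ≠ jstar → b ≠ jstar → (pos a : ℕ) < (pos b : ℕ) →
      g a < g b := by
    intro a b ha hb hab
    have h1 := (pos a).isLt
    have h2 := (pos b).isLt
    have h3 := hne a ha
    have h4 := hne b hb
    simp only [hg, if_neg ha, if_neg hb]
    split_ifs <;> omega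
  have key3 : ∀ a b : Fin n, a ≠ jstar → b ≠ jstar → g a ≤ g b →
      (pos a : ℕ) ≤ (pos b : ℕ) := by
    intro a b ha hb hab
    have h1 := (pos a).isLt
    have h2 := (pos b).isLt
    have h3 := hne a ha
    have h4 := hne b hb
    simp only [hg, if_neg ha, if_neg hb] at hab
    split_ifs at hab <;> omega
  set pos' : Fin n → Fin n := fun k => ⟨g k, hglt k⟩ with hpos'
  have hinj : Function.Injective pos' := by
    intro a b hab
    have hab' : g a = g b := by simpa [hpos', Fin.ext_iff] using hab
    by_cases ha : a = jstar <;> by_cases hb : b = jstar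
    · rw [ha, hb]
    · exfalso; rw [ha, hgjs] at hab'; have := hlt' b hb; omega
    · exfalso; rw [hb, hgjs] at hab'; have := hlt' a ha; omega
    · exact σ.symm.injective (Fin.ext (key a b ha hb hab'))
  set π : Equiv.Perm (Fin n) :=
    (Equiv.ofBijective pos' (Finite.injective_iff_bijective.mp hinj)).symm with hπ
  have hsymm : ∀ k, π.symm k = pos' k := fun k => rfl
  have hfeas : ∀ i j, prec i j → π.symm i < π.symm j := by
    intro i j hij
    have hi : i ≠ jstar := fun h => hns j (h ▸ hij)
    have hlt2 : (pos i : ℕ) < (pos j : ℕ) := hσ i j hij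
    rw [hsymm, hsymm, Fin.lt_def]
    by_cases hj : j = jstar
    · subst hj
      simpa [hpos', hgjs] using hlt' i hi
    · exact key2 i j hi hj hlt2
  have hlast : π ⟨n - 1, Nat.sub_lt hn Nat.one_pos⟩ = jstar := by
    have h : π.symm jstar = ⟨n - 1, Nat.sub_lt hn Nat.one_pos⟩ := by
      rw [hsymm]; exact Fin.ext (by simpa [hpos'] using hgjs)
    rw [← h, Equiv.apply_symm_apply]
  refine ⟨π, hfeas, hlast, ?_⟩
  unfold schedCost
  apply Finset.sup'_le
  intro j _
  by_cases hj : j = jstar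
  · rw [hj]
    have hu : Finset.univ.filter (fun k => π.symm k ≤ π.symm jstar) = Finset.univ := by
      apply Finset.filter_true_of_mem
      intro k _
      rw [hsymm, hsymm, Fin.le_def]
      have := hglt k
      simp only [hpos']
      rw [hgjs]
      omega
    rw [hu]
    set i0 := σ ⟨n - 1, Nat.sub_lt hn Nat.one_pos⟩ with hi0
    have hi0ns : ∀ l, ¬ prec i0 l := by
      intro l hl
      have h1 : (pos i0 : ℕ) < (pos l : ℕ) := hσ i0 l hl
      have h2 : pos i0 = ⟨n - 1, Nat.sub_lt hn Nat.one_pos⟩ := σ.symm_apply_apply _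
      have h3 := (pos l).isLt
      rw [h2] at h1
      simp at h1
      omega
    have hu2 : Finset.univ.filter (fun k => σ.symm k ≤ σ.symm i0) = Finset.univ := by
      apply Finset.filter_true_of_mem
      intro k _
      have h2 : σ.symm i0 = ⟨n - 1, Nat.sub_lt hn Nat.one_pos⟩ := σ.symm_apply_apply _
      rw [h2, Fin.le_def]
      have := (σ.symm k).isLt
      simp
      omega
    calc Fj hK p w d Finset.univ jstar ≤ Fj hK p w d Finset.univ i0 := hmin i0 hi0ns
      _ = Fj hK p w d (Finset.univ.filter (fun k => σ.symm k ≤ σ.symm i0)) i0 := by rw [hu2]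
      _ ≤ _ := Finset.le_sup'
          (f := fun j => Fj hK p w d (Finset.univ.filter (fun k => σ.symm k ≤ σ.symm j)) j)
          (Finset.mem_univ i0)
  · have hsub : Finset.univ.filter (fun k => π.symm k ≤ π.symm j) ⊆
        Finset.univ.filter (fun k => σ.symm k ≤ σ.symm j) := by
      intro k hk
      rw [Finset.mem_filter] at hk ⊢
      refine ⟨Finset.mem_univ _, ?_⟩
      have hk2 : g k ≤ g j := by
        have := hk.2
        rw [hsymm, hsymm, Fin.le_def] at this
        simpa [hpos'] using this
      have hkne : k ≠ jstar := by
        intro h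
        rw [h, hgjs] at hk2
        have := hlt' j hj
        omega
      rw [Fin.le_def]
      exact key3 k j hkne hj hk2
    calc Fj hK p w d (Finset.univ.filter (fun k => π.symm k ≤ π.symm j)) j
        ≤ Fj hK p w d (Finset.univ.filter (fun k => σ.symm k ≤ σ.symm j)) j :=
          Fj_mono hK p w d hp hw hsub j
      _ ≤ _ := Finset.le_sup'
          (f := fun j => Fj hK p w d (Finset.univ.filter (fun k => σ.symm k ≤ σ.symm j)) j)
          (Finset.mem_univ j)

/-- key exchange lemma behind Theorem 3: if j* has no successor in the
precedence order and F_{j*}(J) ≤ F_i(J) for every job i without a successor, then there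
is a feasible schedule with j* in the last position whose min-max cost is minimal among
all feasible schedules. -/
theorem exchange_lemma (n K : ℕ) (hn : 0 < n) (hK : 0 < K)
    (prec : Fin n → Fin n → Prop)
    (hirr : ∀ j, ¬ prec j j)
    (htrans : ∀ i j k, prec i j → prec j k → prec i k)
    (p w d : Fin n → Fin K → ℝ)
    (hp : ∀ j i, 0 ≤ p j i) (hw : ∀ j i, 0 ≤ w j i) (hd : ∀ j i, 0 ≤ d j i)
    (jstar : Fin n) (hns : ∀ l, ¬ prec jstar l)
    (hmin : ∀ i : Fin n, (∀ l, ¬ prec i l) →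
      Fj hK p w d Finset.univ jstar ≤ Fj hK p w d Finset.univ i) :
    ∃ π : Equiv.Perm (Fin n),
      (∀ i j, prec i j → π.symm i < π.symm j) ∧
      π ⟨n - 1, Nat.sub_lt hn Nat.one_pos⟩ = jstar ∧
      ∀ σ : Equiv.Perm (Fin n), (∀ i j, prec i j → σ.symm i < σ.symm j) →
        schedCost hn hK p w d π ≤ schedCost hn hK p w d σ := by
  classical
  obtain ⟨σ1, hσ1⟩ := exists_feasible prec hirr htrans
  set F : Finset (Equiv.Perm (Fin n)) :=
    Finset.univ.filter (fun σ => ∀ i j, prec i j → σ.symm i < σ.symm j) with hF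
  have hFne : F.Nonempty := ⟨σ1, Finset.mem_filter.mpr ⟨Finset.mem_univ _, hσ1⟩⟩
  obtain ⟨σ0, hσ0F, hσ0min⟩ := Finset.exists_min_image F (schedCost hn hK p w d) hFne
  have hσ0 : ∀ i j, prec i j → σ0.symm i < σ0.symm j := by
    have := hσ0F
    rw [hF, Finset.mem_filter] at this
    exact this.2
  obtain ⟨π, h1, h2, h3⟩ := exchange_step hn hK prec p w d hp hw jstar hns hmin σ0 hσ0
  exact ⟨π, h1, h2, fun τ hτ => le_trans h3 (hσ0min τ (Finset.mem_filter.mpr ⟨Finset.mem_univ _, hτ⟩))⟩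
end

section
/- (Theorem 7) Let K ≥ 1 be an integer, let Π be a finite nonempty set, and let f : Π × {1,…,K} → ℝ assign a nonnegative cost f(π,S_i) to each element π ∈ Π and each index i. Let v = (v_1,…,v_K) satisfy v_i ∈ [0,1] for all i, v_1 + … + v_K = 1, v_1 = … = v_{k−1} = 0 and v_k > 0 for some k ∈ {1,…,K}. For π ∈ Π let OWA(π) = owa_v(f(π,S_1),…,f(π,S_K)) and let q_k(π) denote the k-th largest value among f(π,S_1),…,f(π,S_K). If π̂ ∈ Π minimizes q_k(π) over Π, then for every π ∈ Π it holds OWA(π̂) ≤ (1/v_k) · OWA(π). -/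
/-- The permutation sorting a vector `f` in nonincreasing order. -/
noncomputable def sortDesc {K : ℕ} (f : Fin K → ℝ) : Equiv.Perm (Fin K) :=
  Tuple.sort (fun j => -f j)

/-- The Ordered Weighted Averaging operator:
`owa v f = Σ_i v_i f_{σ(i)}` where `σ` sorts `f` in nonincreasing order. -/
noncomputable def owa {K : ℕ} (v f : Fin K → ℝ) : ℝ :=
  ∑ i : Fin K, v i * f (sortDesc f i)

/-- `kthLargest f k` is the entry of `f` at position `k` (0-based) after sorting
in nonincreasing order. -/
noncomputable def kthLargest {K : ℕ} (f : Fin K → ℝ) (k : Fin K) : ℝ :=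
  f (sortDesc f k)

/-- Theorem 7: if the OWA weights satisfy v_1 = … = v_{k−1} = 0 and
v_k > 0, and π̂ minimizes the k-th largest cost over the finite nonempty set Π, then
OWA(π̂) ≤ (1/v_k) · OWA(π) for every π ∈ Π.  (Indices are 0-based: `k : Fin K`.) -/
theorem kth_largest_minimizer_approx (K : ℕ) (hK : 0 < K)
    (Sch : Type*) [Fintype Sch] [Nonempty Sch]
    (f : Sch → Fin K → ℝ) (hf : ∀ π i, 0 ≤ f π i)
    (v : Fin K → ℝ) (hv : ∀ i, v i ∈ Set.Icc (0 : ℝ) 1)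
    (hsum : ∑ i : Fin K, v i = 1)
    (k : Fin K) (hzero : ∀ i : Fin K, i < k → v i = 0) (hpos : 0 < v k)
    (πhat : Sch) (hmin : ∀ π : Sch, kthLargest (f πhat) k ≤ kthLargest (f π) k)
    (π : Sch) :
    owa v (f πhat) ≤ (1 / v k) * owa v (f π) := by
  have hA : owa v (f πhat) ≤ kthLargest (f πhat) k := by
    unfold owa kthLargest
    calc ∑ i : Fin K, v i * f πhat (sortDesc (f πhat) i)
        ≤ ∑ i : Fin K, v i * f πhat (sortDesc (f πhat) k) := by
          apply Finset.sum_le_sum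
          intro i _
          rcases lt_or_ge i k with h | h
          · simp [hzero i h]
          · refine mul_le_mul_of_nonneg_left ?_ (hv i).1
            have := Tuple.monotone_sort (fun j => -f πhat j) h
            simp only [Function.comp_apply] at this
            have : -f πhat (Tuple.sort (fun j => -f πhat j) k)
                ≤ -f πhat (Tuple.sort (fun j => -f πhat j) i) := this
            simpa [sortDesc] using neg_le_neg_iff.mp this
      _ = f πhat (sortDesc (f πhat) k) := by
          rw [← Finset.sum_mul, hsum, one_mul]
  have hB : kthLargest (f πhat) k ≤ kthLargest (f π) k := hmin π
  have hC : v k * kthLargest (f π) k ≤ owa v (f π) := by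
    unfold owa kthLargest
    exact Finset.single_le_sum (fun i _ => mul_nonneg (hv i).1 (hf π _))
      (Finset.mem_univ k)
  have : kthLargest (f π) k ≤ (1 / v k) * owa v (f π) := by
    rw [one_div, ← div_eq_inv_mul, le_div_iff₀ hpos, mul_comm]
    exact hC
  linarith
end

section
/- (Corollary to Theorem 7) Let K ≥ 1 be an integer, let Π be a finite nonempty set, and let f : Π × {1,…,K} → ℝ assign a nonnegative cost f(π,S_i) to each π ∈ Π and each i. Let v = (v_1,…,v_K) satisfy v_i ∈ [0,1] for all i, v_1 + … + v_K = 1, and be nonincreasing: v_1 ≥ v_2 ≥ … ≥ v_K. For π ∈ Π let OWA(π) = owa_v(f(π,S_1),…,f(π,S_K)). If π̂ ∈ Π minimizes max_{i∈{1,…,K}} f(π,S_i) over Π, then for every π ∈ Π it holds OWA(π̂) ≤ (1/v_1) · OWA(π) ≤ K · OWA(π). (In particular v_1 ≥ 1/K > 0.) -/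
lemma sortDesc_zero_max {K : ℕ} (hK : 0 < K) (g : Fin K → ℝ) (i : Fin K) :
    g i ≤ g (sortDesc g ⟨0, hK⟩) := by
  have hmono := Tuple.monotone_sort (fun j => -g j)
  have h := hmono (a := (⟨0, hK⟩ : Fin K)) (b := (sortDesc g)⁻¹ i)
    (by exact Fin.mk_le_of_le_val (Nat.zero_le _))
  simp only [Function.comp_apply, sortDesc, Equiv.Perm.inv_def, Equiv.apply_symm_apply] at h
  simp only [sortDesc]
  linarith

/-- Corollary to Theorem 7: if the OWA weights are nonincreasing and π̂
minimizes the maximum cost, then OWA(π̂) ≤ (1/v_1)·OWA(π) ≤ K·OWA(π) for every π; in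
particular v_1 ≥ 1/K > 0. -/
theorem minmax_minimizer_approx (K : ℕ) (hK : 0 < K)
    (hne : (Finset.univ : Finset (Fin K)).Nonempty)
    (Sch : Type*) [Fintype Sch] [Nonempty Sch]
    (f : Sch → Fin K → ℝ) (hf : ∀ π i, 0 ≤ f π i)
    (v : Fin K → ℝ) (hv : ∀ i, v i ∈ Set.Icc (0 : ℝ) 1)
    (hsum : ∑ i : Fin K, v i = 1)
    (hmono : ∀ i j : Fin K, i ≤ j → v j ≤ v i)
    (πhat : Sch)
    (hmin : ∀ π : Sch, Finset.univ.sup' hne (f πhat) ≤ Finset.univ.sup' hne (f π))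
    (π : Sch) :
    owa v (f πhat) ≤ (1 / v ⟨0, hK⟩) * owa v (f π) ∧
    (1 / v ⟨0, hK⟩) * owa v (f π) ≤ (K : ℝ) * owa v (f π) ∧
    (1 : ℝ) / K ≤ v ⟨0, hK⟩ ∧ (0 : ℝ) < 1 / K := by
  have hKpos : (0:ℝ) < K := Nat.cast_pos.mpr hK
  have h0le : ∀ i : Fin K, (⟨0, hK⟩ : Fin K) ≤ i := fun i =>
    Fin.mk_le_of_le_val (Nat.zero_le _)
  have hv0 : (1:ℝ)/K ≤ v ⟨0, hK⟩ := by
    rw [div_le_iff₀ hKpos]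
    calc (1:ℝ) = ∑ i : Fin K, v i := hsum.symm
      _ ≤ ∑ _i : Fin K, v ⟨0, hK⟩ :=
          Finset.sum_le_sum (fun i _ => hmono _ i (h0le i))
      _ = v ⟨0, hK⟩ * K := by simp [Finset.sum_const, mul_comm]
  have hv0pos : 0 < v ⟨0, hK⟩ := lt_of_lt_of_le (by positivity) hv0
  -- maximum of a cost vector equals value at sortDesc 0
  have hmax : ∀ g : Fin K → ℝ, Finset.univ.sup' hne g = g (sortDesc g ⟨0, hK⟩) := by
    intro g
    apply le_antisymm
    · exact Finset.sup'_le hne g (fun i _ => sortDesc_zero_max hK g i)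
    · exact Finset.le_sup' g (Finset.mem_univ _)
  -- owa π̂ ≤ max π̂
  have howa_le : owa v (f πhat) ≤ Finset.univ.sup' hne (f πhat) := by
    rw [hmax]
    calc owa v (f πhat) = ∑ i : Fin K, v i * f πhat (sortDesc (f πhat) i) := rfl
      _ ≤ ∑ i : Fin K, v i * f πhat (sortDesc (f πhat) ⟨0, hK⟩) :=
          Finset.sum_le_sum (fun i _ => mul_le_mul_of_nonneg_left
            (sortDesc_zero_max hK (f πhat) _) (hv i).1)
      _ = f πhat (sortDesc (f πhat) ⟨0, hK⟩) := by
          rw [← Finset.sum_mul, hsum, one_mul]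
  -- v0 * max π ≤ owa π
  have hge : v ⟨0, hK⟩ * Finset.univ.sup' hne (f π) ≤ owa v (f π) := by
    rw [hmax]
    have := Finset.single_le_sum (f := fun i : Fin K => v i * f π (sortDesc (f π) i))
      (fun i _ => mul_nonneg (hv i).1 (hf π _)) (Finset.mem_univ ⟨0, hK⟩)
    exact this
  have howa_nonneg : 0 ≤ owa v (f π) :=
    Finset.sum_nonneg (fun i _ => mul_nonneg (hv i).1 (hf π _))
  refine ⟨?_, ?_, hv0, by positivity⟩
  · calc owa v (f πhat) ≤ Finset.univ.sup' hne (f πhat) := howa_le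
      _ ≤ Finset.univ.sup' hne (f π) := hmin π
      _ ≤ (1 / v ⟨0, hK⟩) * owa v (f π) := by
          rw [div_mul_eq_mul_div, le_div_iff₀ hv0pos, one_mul, mul_comm]
          exact hge
  · apply mul_le_mul_of_nonneg_right _ howa_nonneg
    rw [div_le_iff₀ hv0pos]
    calc (1:ℝ) ≤ K * (1/K) := by rw [mul_one_div, div_self hKpos.ne']
      _ ≤ K * v ⟨0, hK⟩ := by
          exact mul_le_mul_of_nonneg_left hv0 hKpos.le
end

section
/- (Approximation ratio K·w_max/w_min) Let J = {1,…,n} be jobs, K ≥ 1 scenarios, and for each j ∈ J, i ∈ {1,…,K} let p_j(S_i) ≥ 0 and w_j(S_i) > 0 be given; set w_max = max_{j,i} w_j(S_i) and w_min = min_{j,i} w_j(S_i). Let Π be a nonempty set of permutations of J (feasible schedules). For π ∈ Π and i ∈ {1,…,K}, the completion time of job j is C_j(π,S_i) = Σ_{k∈pred(π,j)} p_k(S_i), where pred(π,j) consists of j and all jobs preceding j in π, and the cost is f(π,S_i) = Σ_{j∈J} w_j(S_i) C_j(π,S_i). Let v = (v_1,…,v_K) satisfy v_i ∈ [0,1],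 v_1 + … + v_K = 1 and v_1 ≥ v_2 ≥ … ≥ v_K, and set OWA(π) = owa_v(f(π,S_1),…,f(π,S_K)). Define ŵ_j = owa_v(w_j(S_1),…,w_j(S_K)), Ĉ_j(π) = Σ_{i=1}^K C_j(π,S_i) and f̂(π) = Σ_{j∈J} ŵ_j Ĉ_j(π). If π̂ ∈ Π minimizes f̂ over Π, then for every π ∈ Π it holds OWA(π̂) ≤ K · (w_max/w_min) · OWA(π). -/
lemma sortDesc_anti {K : ℕ} (f : Fin K → ℝ) :
    Antitone (fun i => f (sortDesc f i)) := by
  intro i j hij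
  have := Tuple.monotone_sort (fun j => -f j) hij
  simpa [sortDesc] using this

lemma sum_sortDesc {K : ℕ} (f : Fin K → ℝ) :
    ∑ i : Fin K, f (sortDesc f i) = ∑ i : Fin K, f i :=
  Equiv.sum_comp (sortDesc f) f

-- owa ≥ v_1 * f i0  when v, f nonneg
lemma owa_ge {K : ℕ} (hK : 0 < K) (v f : Fin K → ℝ)
    (hv : ∀ i, 0 ≤ v i) (hf : ∀ i, 0 ≤ f i) (i0 : Fin K) :
    v ⟨0, hK⟩ * f i0 ≤ owa v f := by
  set k := (sortDesc f).symm i0 with hk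
  have h1 : f i0 = f (sortDesc f k) := by rw [hk]; simp
  have h2 : f (sortDesc f k) ≤ f (sortDesc f ⟨0, hK⟩) :=
    sortDesc_anti f (by simp [Fin.le_def])
  calc v ⟨0, hK⟩ * f i0 ≤ v ⟨0, hK⟩ * f (sortDesc f ⟨0, hK⟩) := by
        rw [h1]; exact mul_le_mul_of_nonneg_left h2 (hv _)
    _ ≤ owa v f := by
        refine Finset.single_le_sum (f := fun i => v i * f (sortDesc f i))
          (fun i _ => mul_nonneg (hv i) (hf _)) (Finset.mem_univ _)

-- owa ≤ v_1 * ∑ f  when f nonneg and v antitone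
lemma owa_le {K : ℕ} (hK : 0 < K) (v f : Fin K → ℝ)
    (hmono : ∀ i j : Fin K, i ≤ j → v j ≤ v i) (hf : ∀ i, 0 ≤ f i) :
    owa v f ≤ v ⟨0, hK⟩ * ∑ i : Fin K, f i := by
  rw [← sum_sortDesc, Finset.mul_sum]
  exact Finset.sum_le_sum fun i _ =>
    mul_le_mul_of_nonneg_right (hmono _ _ (by simp [Fin.le_def])) (hf _)

-- Chebyshev : ∑ f ≤ K * owa v f
lemma sum_le_K_mul_owa {K : ℕ} (v f : Fin K → ℝ)
    (hsum : ∑ i : Fin K, v i = 1)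
    (hmono : ∀ i j : Fin K, i ≤ j → v j ≤ v i) :
    ∑ i : Fin K, f i ≤ (K : ℝ) * owa v f := by
  have hmv : Monovary v (fun i => f (sortDesc f i)) := by
    intro i j hij
    by_contra h
    push_neg at h
    have hji : j < i := by
      by_contra h'
      push_neg at h'
      exact absurd (sortDesc_anti f h') (not_le.2 hij)
    exact absurd (hmono j i hji.le) (not_le.2 h)
  have := hmv.sum_mul_sum_le_card_mul_sum
  rw [hsum, one_mul] at this
  simpa [owa, sum_sortDesc f] using this

lemma owa_le_of_le {K : ℕ} (v f : Fin K → ℝ) (M : ℝ)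
    (hv0 : ∀ i, 0 ≤ v i) (hsum : ∑ i : Fin K, v i = 1) (hfM : ∀ i, f i ≤ M) :
    owa v f ≤ M := by
  calc owa v f ≤ ∑ i : Fin K, v i * M :=
        Finset.sum_le_sum fun i _ => mul_le_mul_of_nonneg_left (hfM _) (hv0 i)
    _ = M := by rw [← Finset.sum_mul, hsum, one_mul]

/-- Completion time of job `j` in schedule `π` (where `π r` is the job at position `r`)
under scenario `i`: the sum of processing times of `j` and all jobs preceding `j`. -/
noncomputable def compl {n K : ℕ} (p : Fin n → Fin K → ℝ)
    (π : Equiv.Perm (Fin n)) (j : Fin n) (i : Fin K) : ℝ :=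
  ∑ k ∈ Finset.univ.filter (fun k => π.symm k ≤ π.symm j), p k i

/-- Weighted sum of completion times of schedule `π` under scenario `i`. -/
noncomputable def cost {n K : ℕ} (p w : Fin n → Fin K → ℝ)
    (π : Equiv.Perm (Fin n)) (i : Fin K) : ℝ :=
  ∑ j : Fin n, w j i * compl p π j i

/-- The surrogate objective `f̂(π) = Σ_j ŵ_j Ĉ_j(π)` with `ŵ_j = owa_v(w_j(S_1),…)` and
`Ĉ_j(π) = Σ_i C_j(π,S_i)`. -/
noncomputable def fhat {n K : ℕ} (v : Fin K → ℝ) (p w : Fin n → Fin K → ℝ)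
    (π : Equiv.Perm (Fin n)) : ℝ :=
  ∑ j : Fin n, owa v (fun i => w j i) * ∑ i : Fin K, compl p π j i

/-- with nonincreasing OWA weights, a minimizer π̂ of the surrogate
objective f̂ over the nonempty set Scheds of feasible schedules satisfies
OWA(π̂) ≤ K·(w_max/w_min)·OWA(π) for every π ∈ Scheds. -/
theorem owa_wsct_approx (n K : ℕ) (hn : 0 < n) (hK : 0 < K)
    (p w : Fin n → Fin K → ℝ)
    (hp : ∀ j i, 0 ≤ p j i) (hw : ∀ j i, 0 < w j i)
    (Scheds : Set (Equiv.Perm (Fin n))) (hScheds : Scheds.Nonempty)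
    (v : Fin K → ℝ) (hv : ∀ i, v i ∈ Set.Icc (0 : ℝ) 1)
    (hsum : ∑ i : Fin K, v i = 1)
    (hmono : ∀ i j : Fin K, i ≤ j → v j ≤ v i)
    (πhat : Equiv.Perm (Fin n)) (hπhat : πhat ∈ Scheds)
    (hmin : ∀ π ∈ Scheds, fhat v p w πhat ≤ fhat v p w π)
    (π : Equiv.Perm (Fin n)) (hπ : π ∈ Scheds) :
    owa v (cost p w πhat) ≤
      (K : ℝ) *
        ((Finset.univ.sup' (⟨(⟨0, hn⟩, ⟨0, hK⟩), Finset.mem_univ _⟩ :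
            (Finset.univ : Finset (Fin n × Fin K)).Nonempty)
            (fun q : Fin n × Fin K => w q.1 q.2)) /
         (Finset.univ.inf' (⟨(⟨0, hn⟩, ⟨0, hK⟩), Finset.mem_univ _⟩ :
            (Finset.univ : Finset (Fin n × Fin K)).Nonempty)
            (fun q : Fin n × Fin K => w q.1 q.2))) *
      owa v (cost p w π) := by
  have hne : (Finset.univ : Finset (Fin n × Fin K)).Nonempty :=
    ⟨(⟨0, hn⟩, ⟨0, hK⟩), Finset.mem_univ _⟩
  set W := Finset.univ.sup' hne (fun q : Fin n × Fin K => w q.1 q.2) with hW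
  set m := Finset.univ.inf' hne (fun q : Fin n × Fin K => w q.1 q.2) with hm
  have hm0 : 0 < m := by
    rw [hm, Finset.lt_inf'_iff]
    exact fun b _ => hw b.1 b.2
  have hWq : ∀ j i, w j i ≤ W := fun j i =>
    Finset.le_sup' (fun q : Fin n × Fin K => w q.1 q.2) (Finset.mem_univ (j, i))
  have hmq : ∀ j i, m ≤ w j i := fun j i =>
    Finset.inf'_le (fun q : Fin n × Fin K => w q.1 q.2) (Finset.mem_univ (j, i))
  have hC : ∀ (σ : Equiv.Perm (Fin n)) j i, 0 ≤ compl p σ j i := fun σ j i =>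
    Finset.sum_nonneg fun k _ => hp k i
  have hcost : ∀ (σ : Equiv.Perm (Fin n)) i, 0 ≤ cost p w σ i := fun σ i =>
    Finset.sum_nonneg fun j _ => mul_nonneg (hw j i).le (hC σ j i)
  set v1 := v ⟨0, hK⟩ with hv1def
  have hwhat_low : ∀ j i, v1 * w j i ≤ owa v (fun i => w j i) := fun j i =>
    owa_ge hK v _ (fun i => (hv i).1) (fun i => (hw j i).le) i
  have hwhat_up : ∀ j, owa v (fun i => w j i) ≤ W := fun j =>
    owa_le_of_le v _ W (fun i => (hv i).1) hsum (fun i => hWq j i)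
  have fhat_eq : ∀ (σ : Equiv.Perm (Fin n)),
      fhat v p w σ = ∑ j : Fin n, ∑ i : Fin K, owa v (fun i => w j i) * compl p σ j i := by
    intro σ
    simp [fhat, Finset.mul_sum]
  have stepA : v1 * ∑ i : Fin K, cost p w πhat i ≤ fhat v p w πhat := by
    rw [fhat_eq]
    have : v1 * ∑ i : Fin K, cost p w πhat i
        = ∑ j : Fin n, ∑ i : Fin K, v1 * (w j i * compl p πhat j i) := by
      rw [Finset.mul_sum]
      simp only [cost, Finset.mul_sum]
      rw [Finset.sum_comm]
    rw [this]
    refine Finset.sum_le_sum fun j _ => Finset.sum_le_sum fun i _ => ?_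
    rw [← mul_assoc]
    exact mul_le_mul_of_nonneg_right (hwhat_low j i) (hC πhat j i)
  have stepE : fhat v p w π ≤ (W / m) * ∑ i : Fin K, cost p w π i := by
    rw [fhat_eq]
    have : (W / m) * ∑ i : Fin K, cost p w π i
        = ∑ j : Fin n, ∑ i : Fin K, (W / m * w j i) * compl p π j i := by
      rw [Finset.mul_sum]
      simp only [cost, Finset.mul_sum]
      rw [Finset.sum_comm]
      simp [mul_assoc]
    rw [this]
    refine Finset.sum_le_sum fun j _ => Finset.sum_le_sum fun i _ => ?_
    refine mul_le_mul_of_nonneg_right ?_ (hC π j i)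
    calc owa v (fun i => w j i) ≤ W := hwhat_up j
      _ = W / m * m := by rw [div_mul_cancel₀ _ hm0.ne']
      _ ≤ W / m * w j i := by
          refine mul_le_mul_of_nonneg_left (hmq j i) ?_
          exact div_nonneg (hm0.le.trans (hmq ⟨0, hn⟩ ⟨0, hK⟩ |>.trans (hWq _ _))) hm0.le
  have hW0 : 0 ≤ W := (hw ⟨0, hn⟩ ⟨0, hK⟩).le.trans (hWq _ _)
  calc owa v (cost p w πhat)
      ≤ v1 * ∑ i : Fin K, cost p w πhat i :=
        owa_le hK v _ hmono (hcost πhat)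
    _ ≤ fhat v p w πhat := stepA
    _ ≤ fhat v p w π := hmin π hπ
    _ ≤ (W / m) * ∑ i : Fin K, cost p w π i := stepE
    _ ≤ (W / m) * ((K : ℝ) * owa v (cost p w π)) := by
        refine mul_le_mul_of_nonneg_left (sum_le_K_mul_owa v _ hsum hmono)
          (div_nonneg hW0 hm0.le)
    _ = (K : ℝ) * (W / m) * owa v (cost p w π) := by ring
end

section
/- (Rounding bound from inequality (8)) Let n ≥ 1, let p_1,…,p_n be nonnegative real numbers, and let C_1,…,C_n be nonnegative real numbers with C_1 ≤ C_2 ≤ … ≤ C_n. Suppose that for every j ∈ {1,…,n} it holds Σ_{i=1}^j p_i C_i ≥ (1/2) (Σ_{i=1}^j p_i)^2. Then for every j ∈ {1,…,n} it holds Σ_{i=1}^j p_i ≤ 2 C_j. -/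
/-- rounding bound from inequality (8): if p_i ≥ 0, the C_i are
nonnegative and nondecreasing, and Σ_{i≤j} p_i C_i ≥ (1/2)(Σ_{i≤j} p_i)² for every j,
then Σ_{i≤j} p_i ≤ 2 C_j for every j. -/
theorem rounding_bound (n : ℕ) (hn : 0 < n) (p C : Fin n → ℝ)
    (hp : ∀ i, 0 ≤ p i) (hC : ∀ i, 0 ≤ C i) (hmono : Monotone C)
    (h : ∀ j : Fin n,
      (1 / 2) * (∑ i ∈ Finset.Iic j, p i) ^ 2 ≤ ∑ i ∈ Finset.Iic j, p i * C i) :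
    ∀ j : Fin n, ∑ i ∈ Finset.Iic j, p i ≤ 2 * C j := by
  intro j
  set S := ∑ i ∈ Finset.Iic j, p i with hS
  have hS0 : 0 ≤ S := Finset.sum_nonneg fun i _ => hp i
  have hupper : ∑ i ∈ Finset.Iic j, p i * C i ≤ S * C j := by
    rw [hS, Finset.sum_mul]
    exact Finset.sum_le_sum fun i hi =>
      mul_le_mul_of_nonneg_left (hmono (Finset.mem_Iic.mp hi)) (hp i)
  have key : (1 / 2) * S ^ 2 ≤ S * C j := le_trans (h j) hupper
  rcases eq_or_lt_of_le hS0 with hS0' | hSpos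
  · rw [← hS0']; linarith [hC j]
  · nlinarith
end

section
/- (Correctness of the enumeration in Theorem 6) Let K ≥ 1 be an integer, k ∈ {1,…,K}, let Π be a finite nonempty set, and let f : Π × {1,…,K} → ℝ. For π ∈ Π let q_k(π) denote the k-th largest value among f(π,S_1),…,f(π,S_K). Then min_{π∈Π} q_k(π) = min over all subsets C ⊆ {1,…,K} with |C| = k − 1 of ( min_{π∈Π} max_{i∈{1,…,K}\C} f(π,S_i) ). -/
/-- `kthLargestN f k h` is the k-th largest entry of `f` (k is 1-based). -/
noncomputable def kthLargestN {K : ℕ} (f : Fin K → ℝ) (k : ℕ) (h : k - 1 < K) : ℝ :=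
  f (Tuple.sort (fun j => -f j) ⟨k - 1, h⟩)

lemma kth_antitone {K : ℕ} (g : Fin K → ℝ) {i j : Fin K} (hij : i ≤ j) :
    g (Tuple.sort (fun j => -g j) j) ≤ g (Tuple.sort (fun j => -g j) i) := by
  have := Tuple.monotone_sort (fun j => -g j) hij
  simpa using this

/-- Lemma A -/
lemma exists_ge_kth {K : ℕ} (g : Fin K → ℝ) (k : ℕ) (h : k - 1 < K)
    (C : Finset (Fin K)) (hC : C.card = k - 1) :
    ∃ i : Fin K, i ∉ C ∧ kthLargestN g k h ≤ g i := by
  set σ := Tuple.sort (fun j => -g j) with hσ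
  set T : Finset (Fin K) := (Finset.Iic ⟨k - 1, h⟩).image σ with hT
  have hTcard : T.card = k - 1 + 1 := by
    rw [hT, Finset.card_image_of_injective _ σ.injective, Fin.card_Iic]
  have : C.card < T.card := by omega
  have hns : ¬ T ⊆ C := fun hsub => absurd (Finset.card_le_card hsub) (not_le.mpr this)
  obtain ⟨i, hiT, hiC⟩ := Finset.not_subset.mp hns
  obtain ⟨j, hj, rfl⟩ := Finset.mem_image.mp hiT
  exact ⟨σ j, hiC, kth_antitone g (Finset.mem_Iic.mp hj)⟩

/-- Lemma B -/
lemma exists_C {K : ℕ} (g : Fin K → ℝ) (k : ℕ) (h : k - 1 < K) :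
    ∃ C : Finset (Fin K), C.card = k - 1 ∧ ∀ i ∉ C, g i ≤ kthLargestN g k h := by
  set σ := Tuple.sort (fun j => -g j) with hσ
  refine ⟨(Finset.Iio ⟨k - 1, h⟩).image σ, ?_, ?_⟩
  · rw [Finset.card_image_of_injective _ σ.injective, Fin.card_Iio]
  · intro i hi
    obtain ⟨j, rfl⟩ := σ.surjective i
    have hj : ¬ j < ⟨k - 1, h⟩ := fun hlt =>
      hi (Finset.mem_image.mpr ⟨j, Finset.mem_Iio.mpr hlt, rfl⟩)
    exact kth_antitone g (le_of_not_gt hj)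

/-- correctness of the enumeration in Theorem 6: the minimum over all
π of the k-th largest cost equals the minimum, over all subsets C of scenarios of
cardinality k−1, of the min-max cost over the remaining scenarios. -/
theorem quantile_enumeration (K : ℕ) (hK : 0 < K)
    (k : ℕ) (hk1 : 1 ≤ k) (hkK : k ≤ K)
    (Sch : Type*) [Fintype Sch] [Nonempty Sch]
    (f : Sch → Fin K → ℝ) :
    sInf {x : ℝ | ∃ π : Sch,
        x = kthLargestN (f π) k (lt_of_lt_of_le (Nat.sub_lt hk1 Nat.one_pos) hkK)}
      = sInf {x : ℝ | ∃ C : Finset (Fin K), C.card = k - 1 ∧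
          x = sInf {y : ℝ | ∃ π : Sch,
            y = sSup {z : ℝ | ∃ i : Fin K, i ∉ C ∧ z = f π i}}} := by
  have hkK' : k - 1 < K := lt_of_lt_of_le (Nat.sub_lt hk1 Nat.one_pos) hkK
  set q : Sch → ℝ := fun π => kthLargestN (f π) k hkK' with hq
  set Z : Finset (Fin K) → Sch → Set ℝ :=
    fun C π => {z : ℝ | ∃ i : Fin K, i ∉ C ∧ z = f π i} with hZ
  set Y : Finset (Fin K) → Set ℝ := fun C => {y : ℝ | ∃ π : Sch, y = sSup (Z C π)} with hY
  -- finiteness / nonemptiness facts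
  have hZfin : ∀ C π, (Z C π).Finite := fun C π =>
    Set.Finite.subset (Set.finite_range (f π)) (by rintro z ⟨i, _, rfl⟩; exact ⟨i, rfl⟩)
  have hZne : ∀ (C : Finset (Fin K)), C.card = k - 1 → ∀ π, (Z C π).Nonempty := by
    intro C hC π
    obtain ⟨i, hi, _⟩ := exists_ge_kth (f π) k hkK' C hC
    exact ⟨f π i, i, hi, rfl⟩
  have hYfin : ∀ C, (Y C).Finite := fun C =>
    Set.Finite.subset (Set.finite_range (fun π => sSup (Z C π)))
      (by rintro y ⟨π, rfl⟩; exact ⟨π, rfl⟩)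
  have hYne : ∀ C, (Y C).Nonempty := fun C => ⟨_, Classical.arbitrary Sch, rfl⟩
  have hLfin : ({x : ℝ | ∃ π : Sch, x = q π}).Finite :=
    Set.Finite.subset (Set.finite_range q) (by rintro x ⟨π, rfl⟩; exact ⟨π, rfl⟩)
  have hLne : ({x : ℝ | ∃ π : Sch, x = q π}).Nonempty := ⟨_, Classical.arbitrary Sch, rfl⟩
  set R : Set ℝ := {x : ℝ | ∃ C : Finset (Fin K), C.card = k - 1 ∧ x = sInf (Y C)} with hR
  have hRfin : R.Finite :=
    Set.Finite.subset (Set.finite_range (fun C => sInf (Y C)))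
      (by rintro x ⟨C, _, rfl⟩; exact ⟨C, rfl⟩)
  have hRne : R.Nonempty := by
    obtain ⟨C, hC, _⟩ := exists_C (f (Classical.arbitrary Sch)) k hkK'
    exact ⟨_, C, hC, rfl⟩
  apply le_antisymm
  · -- LHS ≤ RHS
    apply le_csInf hRne
    rintro x ⟨C, hC, rfl⟩
    apply le_csInf (hYne C)
    rintro y ⟨π, rfl⟩
    obtain ⟨i, hi, hgi⟩ := exists_ge_kth (f π) k hkK' C hC
    calc sInf {x : ℝ | ∃ π : Sch, x = q π} ≤ q π := csInf_le hLfin.bddBelow ⟨π, rfl⟩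
      _ ≤ f π i := hgi
      _ ≤ sSup (Z C π) := le_csSup (hZfin C π).bddAbove ⟨i, hi, rfl⟩
  · -- RHS ≤ LHS
    apply le_csInf hLne
    rintro x ⟨π, rfl⟩
    obtain ⟨C, hC, hCle⟩ := exists_C (f π) k hkK'
    calc sInf R ≤ sInf (Y C) := csInf_le hRfin.bddBelow ⟨C, hC, rfl⟩
      _ ≤ sSup (Z C π) := csInf_le (hYfin C).bddBelow ⟨π, rfl⟩
      _ ≤ q π := csSup_le (hZne C hC π) (by rintro z ⟨i, hi, rfl⟩; exact hCle i hi)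
end

section
/- (Reduction correctness in Theorem 1(i)) Let φ be a Boolean formula with variables x_1,…,x_n and clauses C_1,…,C_m, each clause being a disjunction of at most 3 literals over pairwise distinct variables, and let L be an integer with 0 ≤ L < m. Construct 2n unit-time jobs J_{x_1}, J_{x̄_1}, …, J_{x_n}, J_{x̄_n}; a schedule π is a permutation of these 2n jobs, and the completion time of a job is its position in π (an integer from 1 to 2n). For each k ∈ {1,…,m} define due dates under scenario S_k as follows: for each i ∈ {1,…,n}, if the literal x_i occurs in C_k then d(J_{x_i},S_k) = 2i−1 and d(J_{x̄_i},S_k) = 2i; if the literal x̄_i occurs in C_k then d(J_{x_i},S_k) = 2i and d(J_{x̄_i},S_k) = 2i−1; otherwise d(J_{x_i},S_k) = d(J_{x̄_i},S_k) = 2i. Let f(π,S_k) = max over the 2n jobs j of [pos_π(j) − d(j,S_k)]^+ (the maximum tardiness under S_k). Then there exists a truth assignment to x_1,…,x_n satisfying at most L of the clauses if and only if there exists a schedule π with Σ_{k=1}^m f(π,S_k) ≤ L. -/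
lemma card_filter_val_lt (N c : ℕ) (h : c ≤ N) :
    (Finset.univ.filter (fun x : Fin N => (x:ℕ) < c)).card = c := by
  have heq : Finset.univ.filter (fun x : Fin N => (x:ℕ) < c)
      = Finset.attachFin (Finset.range c)
        (fun m hm => lt_of_lt_of_le (Finset.mem_range.mp hm) h) := by
    ext x; simp [Finset.mem_attachFin]
  rw [heq, Finset.card_attachFin, Finset.card_range]

lemma card_filter_fst_lt (n : ℕ) (i : ℕ) (h : i ≤ n) :
    (Finset.univ.filter (fun j : Fin n × Bool => (j.1:ℕ) < i)).card = 2 * i := by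
  have : (Finset.univ.filter (fun j : Fin n × Bool => (j.1:ℕ) < i))
      = (Finset.univ.filter (fun x : Fin n => (x:ℕ) < i)) ×ˢ (Finset.univ : Finset Bool) := by
    ext ⟨a, b⟩; simp
  rw [this, Finset.card_product, card_filter_val_lt n i h]
  simp [mul_comm]


/-- reduction correctness in Theorem 1(i).
A formula with n variables and m clauses is encoded by `cl : Fin m → Fin n → Option Bool`:
`cl k i = some true` iff the literal x_i occurs in clause C_k, `cl k i = some false` iff
the literal x̄_i occurs in C_k, and `cl k i = none` otherwise (so variables within a
clause are automatically pairwise distinct); each clause has at most 3 literals.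
Jobs are pairs `(i, b) : Fin n × Bool`, where `(i, true)` is J_{x_i} and `(i, false)` is
J_{x̄_i}; a schedule is a bijection `π` from jobs to positions `Fin (2n)`, and the
completion time of job j is `(π j) + 1 ∈ {1,…,2n}` (all processing times are 1).
The due date of job `(i,b)` under scenario S_k is `2i+1` (i.e. 2(i+1)−1, 1-based) if the
corresponding literal occurs in C_k and `2i+2` (i.e. 2(i+1), 1-based) otherwise, matching
the construction in the paper.  `f(π,S_k)` is the maximum tardiness under S_k (natural
subtraction realizes [·]^+).  Claim: some assignment satisfies at most L clauses iff some
schedule π has Σ_k f(π,S_k) ≤ L. -/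
theorem min3sat_reduction (n m : ℕ) (hn : 0 < n) (hm : 0 < m)
    (cl : Fin m → Fin n → Option Bool)
    (hcl : ∀ k : Fin m,
      (Finset.univ.filter (fun i : Fin n => cl k i ≠ none)).card ≤ 3)
    (L : ℕ) (hL : L < m) :
    (∃ a : Fin n → Bool,
        (Finset.univ.filter
          (fun k : Fin m => ∃ i : Fin n, ∃ b : Bool, cl k i = some b ∧ a i = b)).card
          ≤ L)
      ↔
    (∃ π : (Fin n × Bool) ≃ Fin (2 * n),
        (∑ k : Fin m,
          Finset.univ.sup (fun j : Fin n × Bool =>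
            ((π j : ℕ) + 1) -
              (if cl k j.1 = some j.2 then 2 * (j.1 : ℕ) + 1 else 2 * (j.1 : ℕ) + 2)))
          ≤ L) := by
  constructor
  · rintro ⟨a, ha⟩
    set g : Fin n × Bool → Fin (2 * n) := fun j =>
      ⟨2 * (j.1 : ℕ) + (if j.2 = a j.1 then 1 else 0), by
        have := j.1.2; split <;> omega⟩ with hgdef
    have hg : Function.Injective g := by
      rintro ⟨i, b⟩ ⟨i', b'⟩ h
      simp only [hgdef, Fin.mk.injEq] at h
      have hi : (i : ℕ) = (i' : ℕ) := by split at h <;> split at h <;> omega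
      have hii : i = i' := Fin.val_injective hi
      subst hii
      have hbb : b = b' := by
        cases b <;> cases b' <;> cases hab : a i <;> simp [hab] at h <;> rfl
      simp [hbb]
    have hbij : Function.Bijective g :=
      (Fintype.bijective_iff_injective_and_card g).mpr ⟨hg, by simp; ring⟩
    refine ⟨Equiv.ofBijective g hbij, ?_⟩
    have hstep : (∑ k : Fin m,
          Finset.univ.sup (fun j : Fin n × Bool =>
            (((Equiv.ofBijective g hbij) j : ℕ) + 1) -
              (if cl k j.1 = some j.2 then 2 * (j.1 : ℕ) + 1 else 2 * (j.1 : ℕ) + 2)))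
        ≤ ∑ k : Fin m,
          if (∃ i : Fin n, ∃ b : Bool, cl k i = some b ∧ a i = b) then 1 else 0 :=
      Finset.sum_le_sum
        (fun k _ => by
          apply Finset.sup_le
          rintro ⟨i, b⟩ -
          simp only [Equiv.ofBijective_apply]
          show 2 * (i : ℕ) + (if b = a i then 1 else 0) + 1 - _ ≤ _
          by_cases hc : cl k i = some b
          · by_cases hab : b = a i
            · have hsat : ∃ i : Fin n, ∃ b : Bool, cl k i = some b ∧ a i = b :=
                ⟨i, b, hc, hab.symm⟩
              rw [if_pos hsat, if_pos hc, if_pos hab]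
              omega
            · rw [if_pos hc, if_neg hab]
              refine le_trans (b := 0) (by omega) (Nat.zero_le _)
          · rw [if_neg hc]
            refine le_trans (b := 0) (by split <;> omega) (Nat.zero_le _))
    have : (∑ k : Fin m,
          if (∃ i : Fin n, ∃ b : Bool, cl k i = some b ∧ a i = b) then 1 else 0)
          = (Finset.univ.filter
            (fun k : Fin m => ∃ i : Fin n, ∃ b : Bool, cl k i = some b ∧ a i = b)).card := by
      rw [Finset.card_filter]
    omega
  · rintro ⟨π, hsum⟩
    -- canonical: every job finishes by 2i+2
    have hcanon : ∀ j : Fin n × Bool, (π j : ℕ) ≤ 2 * (j.1 : ℕ) + 1 := by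
      by_contra h
      push_neg at h
      obtain ⟨j, hj⟩ := h
      have h1 : ∀ k : Fin m, 1 ≤ Finset.univ.sup (fun j : Fin n × Bool =>
          ((π j : ℕ) + 1) -
            (if cl k j.1 = some j.2 then 2 * (j.1 : ℕ) + 1 else 2 * (j.1 : ℕ) + 2)) := by
        intro k
        refine le_trans ?_ (Finset.le_sup (Finset.mem_univ j))
        split <;> omega
      have : m ≤ ∑ k : Fin m, Finset.univ.sup (fun j : Fin n × Bool =>
          ((π j : ℕ) + 1) -
            (if cl k j.1 = some j.2 then 2 * (j.1 : ℕ) + 1 else 2 * (j.1 : ℕ) + 2)) := by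
        calc m = ∑ _k : Fin m, 1 := by simp
        _ ≤ _ := Finset.sum_le_sum (fun k _ => h1 k)
      omega
    have hlb : ∀ j : Fin n × Bool, 2 * (j.1 : ℕ) ≤ (π j : ℕ) := by
      intro j
      by_contra hlt
      push_neg at hlt
      have himg : (Finset.univ.filter (fun p : Fin n × Bool => (p.1 : ℕ) < (j.1 : ℕ))).image π
          = Finset.univ.filter (fun q : Fin (2 * n) => (q : ℕ) < 2 * (j.1 : ℕ)) := by
        apply Finset.eq_of_subset_of_card_le
        · intro q hq
          simp only [Finset.mem_image, Finset.mem_filter, Finset.mem_univ, true_and] at hq ⊢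
          obtain ⟨p, hp, rfl⟩ := hq
          have := hcanon p
          omega
        · rw [Finset.card_image_of_injective _ π.injective,
            card_filter_val_lt _ _ (by have := j.1.2; omega),
            card_filter_fst_lt _ _ (le_of_lt j.1.2)]
      have hmem : π j ∈ Finset.univ.filter (fun q : Fin (2 * n) => (q : ℕ) < 2 * (j.1 : ℕ)) := by
        simp [hlt]
      rw [← himg] at hmem
      simp only [Finset.mem_image, Finset.mem_filter, Finset.mem_univ, true_and] at hmem
      obtain ⟨p, hp, hpj⟩ := hmem
      have := π.injective hpj
      subst this
      omega
    set a : Fin n → Bool := fun i => decide ((π (i, true) : ℕ) = 2 * (i : ℕ) + 1) with ha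
    have hne : ∀ i : Fin n, (π (i, true) : ℕ) ≠ (π (i, false) : ℕ) := by
      intro i h
      have := π.injective (Fin.val_injective h)
      simp at this
    have hkey : ∀ (i : Fin n) (b : Bool), a i = b → (π (i, b) : ℕ) = 2 * (i : ℕ) + 1 := by
      intro i b hab
      have ht := hcanon (i, true); have ht' := hlb (i, true)
      have hf := hcanon (i, false); have hf' := hlb (i, false)
      have hne' := hne i
      simp only at ht ht' hf hf'
      cases b
      · simp [ha] at hab
        omega
      · simp [ha] at hab
        exact hab
    refine ⟨a, ?_⟩
    have hind : ∀ k : Fin m,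
        (if (∃ i : Fin n, ∃ b : Bool, cl k i = some b ∧ a i = b) then 1 else 0)
          ≤ Finset.univ.sup (fun j : Fin n × Bool =>
            ((π j : ℕ) + 1) -
              (if cl k j.1 = some j.2 then 2 * (j.1 : ℕ) + 1 else 2 * (j.1 : ℕ) + 2)) := by
      intro k
      split
      · next hsat =>
        obtain ⟨i, b, hc, hab⟩ := hsat
        refine le_trans ?_ (Finset.le_sup (Finset.mem_univ (i, b)))
        have := hkey i b hab
        simp [hc, this]
      · exact Nat.zero_le _
    have : (Finset.univ.filter
        (fun k : Fin m => ∃ i : Fin n, ∃ b : Bool, cl k i = some b ∧ a i = b)).card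
        = ∑ k : Fin m,
          if (∃ i : Fin n, ∃ b : Bool, cl k i = some b ∧ a i = b) then 1 else 0 := by
      rw [Finset.card_filter]
    rw [this]
    exact le_trans (Finset.sum_le_sum (fun k _ => hind k)) hsum
end

section
/- (Reduction correctness in the proof of Theorem 10) Let φ be a Boolean formula with variables x_1,…,x_n and clauses C_1,…,C_m, each clause being a disjunction of at most 2 literals over pairwise distinct variables, and let L be an integer with 0 ≤ L < m. Construct 2n jobs J_{x_1}, J_{x̄_1}, …, J_{x_n}, J_{x̄_n} and m scenarios S_1,…,S_m, where under S_k (corresponding to clause C_k): for each literal of C_k, if the literal is x_i then p(J_{x_i},S_k) = 0, w(J_{x_i},S_k) = 1, p(J_{x̄_i},S_k) = 1, w(J_{x̄_i},S_k) = 0; if the literal is x̄_i then p(J_{x̄_i},S_k) = 0, w(J_{x̄_i},S_k) = 1, p(J_{x_i},S_k) = 1, w(J_{x_i},S_k) = 0; and for every variable x_i occurring in no literal of C_k, both processing times and both weights of J_{x_i} and J_{x̄_i} under S_k are 0. A schedule π is a permutation of the 2n jobs; under scenario S_k the completion time C_j(π,S_k) of job j is the sum of the processing times under S_k of j and of all jobs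 preceding j in π, and the cost is f(π,S_k) = Σ_j w_j(S_k) C_j(π,S_k). Then there exists a truth assignment to x_1,…,x_n satisfying at most L of the clauses if and only if there exists a schedule π such that f(π,S_k) = 0 for at least m − L indices k ∈ {1,…,m}. -/
/-- reduction correctness in the proof of Theorem 10.
A formula with n variables and m clauses (each a disjunction of at most 2 literals over
pairwise distinct variables) is encoded by `cl : Fin m → Fin n → Option Bool`:
`cl k i = some true` iff x_i occurs in C_k, `cl k i = some false` iff x̄_i occurs in C_k,
and `cl k i = none` otherwise.  Jobs are pairs `(i, b) : Fin n × Bool` ((i,true) = J_{x_i},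
(i,false) = J_{x̄_i}); under scenario S_k, job `(i,b)` has processing time 1 if the
opposite literal (i, ¬b) occurs in C_k and 0 otherwise, and weight 1 if literal (i,b)
occurs in C_k and 0 otherwise — exactly the construction of the paper.  A schedule is a
bijection `π` from jobs to positions `Fin (2n)`; the completion time of job j under S_k
is the sum of processing times of j and of all jobs preceding it, and
`f(π,S_k) = Σ_j w_j(S_k)·C_j(π,S_k)`.  Claim: some assignment satisfies at most L clauses
iff some schedule π has cost 0 under at least m − L scenarios. -/
theorem min2sat_reduction (n m : ℕ) (hn : 0 < n) (hm : 0 < m)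
    (cl : Fin m → Fin n → Option Bool)
    (hcl : ∀ k : Fin m,
      (Finset.univ.filter (fun i : Fin n => cl k i ≠ none)).card ≤ 2)
    (L : ℕ) (hL : L < m) :
    (∃ a : Fin n → Bool,
        (Finset.univ.filter
          (fun k : Fin m => ∃ i : Fin n, ∃ b : Bool, cl k i = some b ∧ a i = b)).card
          ≤ L)
      ↔
    (∃ π : (Fin n × Bool) ≃ Fin (2 * n),
        m - L ≤
          (Finset.univ.filter (fun k : Fin m =>
            (∑ j : Fin n × Bool,
              (if cl k j.1 = some j.2 then 1 else 0) *
                (∑ j' ∈ Finset.univ.filter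
                    (fun j' : Fin n × Bool => π j' ≤ π j),
                  (if cl k j'.1 = some (!j'.2) then 1 else 0))) = (0 : ℕ))).card) := by
  constructor
  · rintro ⟨a, ha⟩
    classical
    -- schedule: jobs with j.2 ≠ a j.1 first (positions < n), others after
    have hf : ∀ j : Fin n × Bool, (if j.2 = a j.1 then n + j.1.val else j.1.val) < 2 * n := by
      intro j
      have := j.1.isLt
      split <;> omega
    set f : Fin n × Bool → Fin (2 * n) :=
      fun j => ⟨if j.2 = a j.1 then n + j.1.val else j.1.val, hf j⟩ with hfdef
    have hinj : Function.Injective f := by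
      intro j₁ j₂ h
      simp only [hfdef, Fin.mk.injEq] at h
      have h1 := j₁.1.isLt
      have h2 := j₂.1.isLt
      split_ifs at h with c1 c2 c2
      · have : j₁.1 = j₂.1 := Fin.ext (by omega)
        exact Prod.ext this (by rw [c1, c2, this])
      · omega
      · omega
      · have : j₁.1 = j₂.1 := Fin.ext (by omega)
        refine Prod.ext this ?_
        have e1 : j₁.2 = !(a j₁.1) := by
          cases hb : a j₁.1 <;> cases hb2 : j₁.2 <;> simp_all
        have e2 : j₂.2 = !(a j₂.1) := by
          cases hb : a j₂.1 <;> cases hb2 : j₂.2 <;> simp_all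
        rw [e1, e2, this]
    have hbij : Function.Bijective f :=
      (Fintype.bijective_iff_injective_and_card f).mpr ⟨hinj, by rw [Fintype.card_prod, Fintype.card_fin, Fintype.card_bool, Fintype.card_fin]; ring⟩
    refine ⟨Equiv.ofBijective f hbij, ?_⟩
    have hsub : (Finset.univ.filter
          (fun k : Fin m => ¬ ∃ i : Fin n, ∃ b : Bool, cl k i = some b ∧ a i = b)) ⊆
        (Finset.univ.filter (fun k : Fin m =>
          (∑ j : Fin n × Bool,
            (if cl k j.1 = some j.2 then 1 else 0) *
              (∑ j' ∈ Finset.univ.filter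
                  (fun j' : Fin n × Bool =>
                    (Equiv.ofBijective f hbij) j' ≤ (Equiv.ofBijective f hbij) j),
                (if cl k j'.1 = some (!j'.2) then 1 else 0))) = (0 : ℕ))) := by
      intro k hk
      simp only [Finset.mem_filter, Finset.mem_univ, true_and] at hk ⊢
      push_neg at hk
      refine Finset.sum_eq_zero ?_
      intro j _
      by_cases hw : cl k j.1 = some j.2
      · have haj : j.2 ≠ a j.1 := fun h => (hk j.1 j.2 hw) h.symm
        have hz : (∑ j' ∈ Finset.univ.filter
            (fun j' : Fin n × Bool =>
              (Equiv.ofBijective f hbij) j' ≤ (Equiv.ofBijective f hbij) j),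
            (if cl k j'.1 = some (!j'.2) then 1 else 0)) = 0 := by
          refine Finset.sum_eq_zero ?_
          intro j' hj'
          simp only [Finset.mem_filter, Finset.mem_univ, true_and] at hj'
          rw [if_neg]
          intro hp
          have haj' : a j'.1 ≠ !j'.2 := fun h => (hk j'.1 (!j'.2) hp) h
          have e2 : j'.2 = a j'.1 := by
            cases hb : a j'.1 <;> cases hb2 : j'.2 <;> simp_all
          have hle : ((Equiv.ofBijective f hbij) j' : ℕ) ≤ ((Equiv.ofBijective f hbij) j : ℕ) :=
            hj'
          simp only [Equiv.ofBijective_apply, hfdef, if_pos e2,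
            if_neg (fun h => haj h)] at hle
          have := j.1.isLt
          omega
        rw [hz, mul_zero]
      · rw [if_neg hw, zero_mul]
    have hcards := Finset.card_filter_add_card_filter_not
      (s := (Finset.univ : Finset (Fin m)))
      (p := fun k : Fin m => ∃ i : Fin n, ∃ b : Bool, cl k i = some b ∧ a i = b)
    simp only [Finset.card_univ, Fintype.card_fin] at hcards
    have hle := Finset.card_le_card hsub
    beta_reduce at hle hcards ⊢
    omega
  · rintro ⟨π, hπ⟩
    classical
    refine ⟨fun i => decide (π (i, false) < π (i, true)), ?_⟩
    have hsub : (Finset.univ.filter (fun k : Fin m =>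
          (∑ j : Fin n × Bool,
            (if cl k j.1 = some j.2 then 1 else 0) *
              (∑ j' ∈ Finset.univ.filter
                  (fun j' : Fin n × Bool => π j' ≤ π j),
                (if cl k j'.1 = some (!j'.2) then 1 else 0))) = (0 : ℕ))) ⊆
        (Finset.univ.filter
          (fun k : Fin m => ¬ ∃ i : Fin n, ∃ b : Bool,
            cl k i = some b ∧ (fun i => decide (π (i, false) < π (i, true))) i = b)) := by
      intro k hk
      simp only [Finset.mem_filter, Finset.mem_univ, true_and] at hk ⊢
      rintro ⟨i, b, hc, hab⟩
      have hterm := (Finset.sum_eq_zero_iff.mp hk) (i, b) (Finset.mem_univ _)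
      simp only [hc, eq_self_iff_true, if_true, one_mul] at hterm
      have hmem : (i, !b) ∈ Finset.univ.filter
          (fun j' : Fin n × Bool => π j' ≤ π (i, b)) := by
        simp only [Finset.mem_filter, Finset.mem_univ, true_and]
        cases b
        · simp only [decide_eq_false_iff_not] at hab
          simpa using le_of_not_gt hab
        · simp only [decide_eq_true_eq] at hab
          exact le_of_lt hab
      have := (Finset.sum_eq_zero_iff.mp hterm) (i, !b) hmem
      simp [hc] at this
    have hcards := Finset.card_filter_add_card_filter_not
      (s := (Finset.univ : Finset (Fin m)))
      (p := fun k : Fin m => ∃ i : Fin n, ∃ b : Bool,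
        cl k i = some b ∧ (fun i => decide (π (i, false) < π (i, true))) i = b)
    simp only [Finset.card_univ, Fintype.card_fin] at hcards
    have hle := Finset.card_le_card hsub
    beta_reduce at hle hcards ⊢
    omega
end
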